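/- Let φ₁(x) = 1728 x (x²−11x−1)⁵ / (x⁴+228x³+494x²−228x+1)³ and z(x) = (7x−1)⁵ / (x² (x+7)⁵). Then, as an identity of rational functions of x (i.e., for all x in the complement of the poles), φ₁(x)² (189−64 φ₁(x))⁵ / (3584 φ₁(x)² + 2457 φ₁(x) − 2916)³ = 1728 z(x) (z(x)²−11 z(x)−1)⁵ / (z(x)⁴+228 z(x)³+494 z(x)²−228 z(x)+1)³. -/
import Mathlib
set_option maxHeartbeats 16000000
set_option maxRecDepth 100000

/-- The degree-12 icosahedral Darboux covering. -/
noncomputable def phi1 (x : ℂ) : ℂ :=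
  1728 * x * (x ^ 2 - 11 * x - 1) ^ 5 /
    (x ^ 4 + 228 * x ^ 3 + 494 * x ^ 2 - 228 * x + 1) ^ 3

/-- The second component of the parameterization of the fiber product. -/
noncomputable def zfun (x : ℂ) : ℂ :=
  (7 * x - 1) ^ 5 / (x ^ 2 * (x + 7) ^ 5)

noncomputable def Rp (x : ℂ) : ℂ :=
  (-27) + (2484)*x + (-5102649)*x^2 + (284216688)*x^3 + (-354428622)*x^4 + (283092408)*x^5 + (354428622)*x^6 + (284216688)*x^7 + (5102649)*x^8 + (2484)*x^9 + (27)*x^10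

noncomputable def Qp (x : ℂ) : ℂ :=
  (1) + (88)*x + (-3803116)*x^2 + (-467922728)*x^3 + (15317741346)*x^4 + (-5260402029768)*x^5 + (157346646529556)*x^6 + (-2224285184418952)*x^7 + (7971986922075279)*x^8 + (-24387587344178848)*x^9 + (-18591310157317416)*x^10 + (-69735917428266848)*x^11 + (-30763575787215204)*x^12 + (69735917428266848)*x^13 + (-18591310157317416)*x^14 + (24387587344178848)*x^15 + (7971986922075279)*x^16 + (2224285184418952)*x^17 + (157346646529556)*x^18 + (5260402029768)*x^19 + (15317741346)*x^20 + (467922728)*x^21 + (-3803116)*x^22 + (-88)*x^23 + (1)*x^24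

/-- Abstract assembly lemma: generic field elements with the algebraic relations. -/
lemma assemble (p z b d a c q u w : ℂ)
    (hb : b ≠ 0) (hd : d ≠ 0)
    (hp : p * b ^ 3 = a) (hzd : z * d = c)
    (hu : 189 * b ^ 3 - 64 * a = u)
    (hv : 3584 * a ^ 2 + 2457 * a * b ^ 3 - 2916 * b ^ 6 = -2916 * q)
    (hw : 27 * (c ^ 2 - 11 * c * d - d ^ 2) = w)
    (hq : c ^ 4 + 228 * c ^ 3 * d + 494 * c ^ 2 * d ^ 2 - 228 * c * d ^ 3 + d ^ 4
        = b * q)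
    (hbridge : a ^ 2 * u ^ 5 * (b * q) ^ 3 * (27 ^ 5 * d)
        = 1728 * c * w ^ 5 * ((-2916) * q) ^ 3 * (b ^ 3 * d ^ 2))
    (hS : 3584 * p ^ 2 + 2457 * p - 2916 ≠ 0)
    (hZ : z ^ 4 + 228 * z ^ 3 + 494 * z ^ 2 - 228 * z + 1 ≠ 0) :
    p ^ 2 * (189 - 64 * p) ^ 5 / (3584 * p ^ 2 + 2457 * p - 2916) ^ 3
      = 1728 * z * (z ^ 2 - 11 * z - 1) ^ 5 /
        (z ^ 4 + 228 * z ^ 3 + 494 * z ^ 2 - 228 * z + 1) ^ 3 := by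
  have pa : p ^ 2 * b ^ 6 = a ^ 2 := by linear_combination (p * b ^ 3 + a) * hp
  have pe : (189 - 64 * p) * b ^ 3 = u := by linear_combination (-64) * hp + hu
  have spb : (3584 * p ^ 2 + 2457 * p - 2916) * b ^ 6 = -2916 * q := by
    linear_combination (3584 * (p * b ^ 3 + a) + 2457 * b ^ 3) * hp + hv
  have zm : (z ^ 2 - 11 * z - 1) * (27 * d ^ 2) = w := by
    linear_combination (27 * (z * d + c) - 297 * d) * hzd + hw
  have zq : (z ^ 4 + 228 * z ^ 3 + 494 * z ^ 2 - 228 * z + 1) * d ^ 4 = b * q := by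
    linear_combination (z ^ 3 * d ^ 3 + z ^ 2 * d ^ 2 * (c + 228 * d)
      + z * d * (c ^ 2 + 228 * c * d + 494 * d ^ 2)
      + (c ^ 3 + 228 * c ^ 2 * d + 494 * c * d ^ 2 - 228 * d ^ 3)) * hzd + hq
  rw [div_eq_div_iff (pow_ne_zero 3 hS) (pow_ne_zero 3 hZ)]
  have hM : (27 : ℂ) ^ 5 * (b ^ 21 * d ^ 13) ≠ 0 := by
    apply mul_ne_zero (by norm_num)
    exact mul_ne_zero (pow_ne_zero _ hb) (pow_ne_zero _ hd)
  apply mul_right_cancel₀ hM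
  have hR : 1728 * z * (z ^ 2 - 11 * z - 1) ^ 5
      * (3584 * p ^ 2 + 2457 * p - 2916) ^ 3
      * (27 ^ 5 * (b ^ 21 * d ^ 13))
      = 1728 * c * w ^ 5 * ((-2916) * q) ^ 3 * (b ^ 3 * d ^ 2) := by
    calc 1728 * z * (z ^ 2 - 11 * z - 1) ^ 5
          * (3584 * p ^ 2 + 2457 * p - 2916) ^ 3
          * (27 ^ 5 * (b ^ 21 * d ^ 13))
        = 1728 * (z * d) * ((z ^ 2 - 11 * z - 1) * (27 * d ^ 2)) ^ 5
            * ((3584 * p ^ 2 + 2457 * p - 2916) * b ^ 6) ^ 3 * (b ^ 3 * d ^ 2) := by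
          ring
      _ = 1728 * c * w ^ 5 * ((-2916) * q) ^ 3 * (b ^ 3 * d ^ 2) := by
          rw [hzd, zm, spb]
  calc p ^ 2 * (189 - 64 * p) ^ 5
          * (z ^ 4 + 228 * z ^ 3 + 494 * z ^ 2 - 228 * z + 1) ^ 3
          * (27 ^ 5 * (b ^ 21 * d ^ 13))
      = (p ^ 2 * b ^ 6) * ((189 - 64 * p) * b ^ 3) ^ 5
          * ((z ^ 4 + 228 * z ^ 3 + 494 * z ^ 2 - 228 * z + 1) * d ^ 4) ^ 3
          * (27 ^ 5 * d) := by ring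
    _ = a ^ 2 * u ^ 5 * (b * q) ^ 3 * (27 ^ 5 * d) := by rw [pa, pe, zq]
    _ = 1728 * c * w ^ 5 * ((-2916) * q) ^ 3 * (b ^ 3 * d ^ 2) := hbridge
    _ = 1728 * z * (z ^ 2 - 11 * z - 1) ^ 5
          * (3584 * p ^ 2 + 2457 * p - 2916) ^ 3
          * (27 ^ 5 * (b ^ 21 * d ^ 13)) := hR.symm

theorem stmt_6 (x : ℂ)
    (h1 : x ^ 4 + 228 * x ^ 3 + 494 * x ^ 2 - 228 * x + 1 ≠ 0)
    (h2 : x ≠ 0) (h3 : x + 7 ≠ 0)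
    (h4 : 3584 * (phi1 x) ^ 2 + 2457 * phi1 x - 2916 ≠ 0)
    (h5 : (zfun x) ^ 4 + 228 * (zfun x) ^ 3 + 494 * (zfun x) ^ 2 -
        228 * zfun x + 1 ≠ 0) :
    (phi1 x) ^ 2 * (189 - 64 * phi1 x) ^ 5 /
        (3584 * (phi1 x) ^ 2 + 2457 * phi1 x - 2916) ^ 3 =
      1728 * zfun x * ((zfun x) ^ 2 - 11 * zfun x - 1) ^ 5 /
        ((zfun x) ^ 4 + 228 * (zfun x) ^ 3 + 494 * (zfun x) ^ 2 -
          228 * zfun x + 1) ^ 3 := by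
  have hD : x ^ 2 * (x + 7) ^ 5 ≠ 0 :=
    mul_ne_zero (pow_ne_zero _ h2) (pow_ne_zero _ h3)
  have hp : phi1 x * (x ^ 4 + 228 * x ^ 3 + 494 * x ^ 2 - 228 * x + 1) ^ 3
      = 1728 * x * (x ^ 2 - 11 * x - 1) ^ 5 :=
    div_mul_cancel₀ _ (pow_ne_zero 3 h1)
  have hzd : zfun x * (x ^ 2 * (x + 7) ^ 5) = (7 * x - 1) ^ 5 :=
    div_mul_cancel₀ _ hD
  have hu : 189 * (x ^ 4 + 228 * x ^ 3 + 494 * x ^ 2 - 228 * x + 1) ^ 3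
      - 64 * (1728 * x * (x ^ 2 - 11 * x - 1) ^ 5)
      = (7 * x - 1) * (x + 7) * Rp x := by rw [Rp]; ring
  have hv : 3584 * (1728 * x * (x ^ 2 - 11 * x - 1) ^ 5) ^ 2
      + 2457 * (1728 * x * (x ^ 2 - 11 * x - 1) ^ 5)
        * (x ^ 4 + 228 * x ^ 3 + 494 * x ^ 2 - 228 * x + 1) ^ 3
      - 2916 * (x ^ 4 + 228 * x ^ 3 + 494 * x ^ 2 - 228 * x + 1) ^ 6
      = -2916 * Qp x := by rw [Qp]; ring
  have hw : 27 * (((7 * x - 1) ^ 5) ^ 2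
      - 11 * (7 * x - 1) ^ 5 * (x ^ 2 * (x + 7) ^ 5)
      - (x ^ 2 * (x + 7) ^ 5) ^ 2)
      = -(x ^ 2 - 11 * x - 1) ^ 2 * Rp x := by rw [Rp]; ring
  have hq : ((7 * x - 1) ^ 5) ^ 4
      + 228 * ((7 * x - 1) ^ 5) ^ 3 * (x ^ 2 * (x + 7) ^ 5)
      + 494 * ((7 * x - 1) ^ 5) ^ 2 * (x ^ 2 * (x + 7) ^ 5) ^ 2
      - 228 * (7 * x - 1) ^ 5 * (x ^ 2 * (x + 7) ^ 5) ^ 3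
      + (x ^ 2 * (x + 7) ^ 5) ^ 4
      = (x ^ 4 + 228 * x ^ 3 + 494 * x ^ 2 - 228 * x + 1) * Qp x := by
    rw [Qp]; ring
  have hbridge : (1728 * x * (x ^ 2 - 11 * x - 1) ^ 5) ^ 2
      * ((7 * x - 1) * (x + 7) * Rp x) ^ 5
      * ((x ^ 4 + 228 * x ^ 3 + 494 * x ^ 2 - 228 * x + 1) * Qp x) ^ 3
      * (27 ^ 5 * (x ^ 2 * (x + 7) ^ 5))
      = 1728 * (7 * x - 1) ^ 5
        * (-(x ^ 2 - 11 * x - 1) ^ 2 * Rp x) ^ 5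
        * ((-2916) * Qp x) ^ 3
        * (((x ^ 4 + 228 * x ^ 3 + 494 * x ^ 2 - 228 * x + 1) ^ 3)
          * (x ^ 2 * (x + 7) ^ 5) ^ 2) := by
    rw [Rp, Qp]; ring
  exact assemble (phi1 x) (zfun x)
    (x ^ 4 + 228 * x ^ 3 + 494 * x ^ 2 - 228 * x + 1)
    (x ^ 2 * (x + 7) ^ 5)
    (1728 * x * (x ^ 2 - 11 * x - 1) ^ 5)
    ((7 * x - 1) ^ 5) (Qp x)
    ((7 * x - 1) * (x + 7) * Rp x)
    (-(x ^ 2 - 11 * x - 1) ^ 2 * Rp x)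
    h1 hD hp hzd hu hv hw hq hbridge h4 h5
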